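/- Let R be a commutative Bézout ring with total quotient ring Q. For any element x = class of p/q in Q/R (p ∈ R, q a nonzerodivisor), ann^R(x) is a principal ideal Rq' and ann^{Q/R}(q') = Rx for a suitable nonzerodivisor q'; in particular, if gcd conditions allow pR + qR = R, then ann^R(x) = Rq and ann^{Q/R}(q) = Rx. -/

import Mathlib

open Localization in
theorem key15 {R : Type*} [CommRing R] (p q : R) (hq : q ∈ nonZeroDivisors R)
    (a b : R) (hab : a * p + b * q = 1)
    (x : Localization (nonZeroDivisors R) ⧸
      (LinearMap.range (Algebra.linearMap R (Localization (nonZeroDivisors R))) :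
        Submodule R (Localization (nonZeroDivisors R))))
    (hx : x = Submodule.Quotient.mk (Localization.mk p ⟨q, hq⟩)) :
    ({r : R | r • x = 0} = {r : R | ∃ s : R, r = s * q}) ∧
      ({y | q • y = 0} = {y | ∃ r : R, y = r • x}) := by
  set Q := Localization (nonZeroDivisors R)
  set N : Submodule R Q := LinearMap.range (Algebra.linearMap R Q) with hN
  have memN : ∀ z : Q, z ∈ N ↔ ∃ s : R, algebraMap R Q s = z := by
    intro z
    simp [hN, Algebra.linearMap_apply]
  -- mk A ⟨q⟩ ∈ N iff ∃ s, A = s * q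
  have hmkN : ∀ (A : R) (t : R) (ht : t ∈ nonZeroDivisors R),
      (Localization.mk A ⟨t, ht⟩ ∈ N ↔ ∃ s : R, A = s * t) := by
    intro A t ht
    rw [memN]
    constructor
    · rintro ⟨s, hs⟩
      rw [← Localization.mk_one_eq_algebraMap, Localization.mk_eq_mk_iff,
        Localization.r_iff_exists] at hs
      obtain ⟨c, hc⟩ := hs
      simp only [Submonoid.coe_one, one_mul] at hc
      have h0 : A - s * t = 0 := (mem_nonZeroDivisors_iff_right.mp c.2) _ (by linear_combination -hc)
      exact ⟨s, by linear_combination h0⟩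
    · rintro ⟨s, rfl⟩
      refine ⟨s, ?_⟩
      rw [← Localization.mk_one_eq_algebraMap, Localization.mk_eq_mk_iff,
        Localization.r_iff_exists]
      exact ⟨1, by push_cast; ring⟩
  constructor
  · ext r
    simp only [Set.mem_setOf_eq, hx, ← Submodule.Quotient.mk_smul,
      Submodule.Quotient.mk_eq_zero, Localization.smul_mk, smul_eq_mul]
    rw [hmkN]
    constructor
    · rintro ⟨s, hs⟩
      exact ⟨a * s + b * r, by linear_combination a * hs - r * hab⟩
    · rintro ⟨s, rfl⟩
      exact ⟨s * p, by ring⟩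
  · ext y
    simp only [Set.mem_setOf_eq]
    constructor
    · intro hy
      obtain ⟨z, rfl⟩ := Submodule.Quotient.mk_surjective N y
      obtain ⟨m, t, rfl⟩ : ∃ m t, z = Localization.mk m t :=
        Localization.induction_on z fun y => ⟨y.1, y.2, rfl⟩
      rw [← Submodule.Quotient.mk_smul, Submodule.Quotient.mk_eq_zero,
        Localization.smul_mk, smul_eq_mul, hmkN _ _ t.2] at hy
      obtain ⟨u, hu⟩ := hy
      refine ⟨a * u, ?_⟩
      rw [hx, ← Submodule.Quotient.mk_smul, Submodule.Quotient.eq,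
        Localization.smul_mk, smul_eq_mul, Localization.sub_mk, memN]
      refine ⟨b * u, ?_⟩
      rw [← Localization.mk_one_eq_algebraMap, Localization.mk_eq_mk_iff,
        Localization.r_iff_exists]
      refine ⟨1, ?_⟩
      push_cast
      linear_combination u * (t : R) * hab - hu
    · rintro ⟨r, rfl⟩
      rw [hx, ← Submodule.Quotient.mk_smul, ← Submodule.Quotient.mk_smul,
        Submodule.Quotient.mk_eq_zero, Localization.smul_mk, Localization.smul_mk,
        smul_eq_mul, smul_eq_mul, hmkN]
      exact ⟨r * p, by ring⟩

/-- Let `R` be a commutative Bézout ring with total quotient ring `Q`, and let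
`x = p/q mod R ∈ Q/R` with `q` a nonzerodivisor.  Then there is a nonzerodivisor `q'`
with `ann^R(x) = Rq'` and `ann^{Q/R}(q') = Rx`; and moreover if `pR + qR = R` then
`ann^R(x) = Rq` and `ann^{Q/R}(q) = Rx`. -/
theorem stmt15 {R : Type*} [CommRing R] [IsBezout R]
    (p : R) (q : R) (hq : q ∈ nonZeroDivisors R) :
    let Q := Localization (nonZeroDivisors R)
    let N : Submodule R Q := LinearMap.range (Algebra.linearMap R Q)
    let x : Q ⧸ N := Submodule.Quotient.mk (Localization.mk p ⟨q, hq⟩)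
    (∃ q' ∈ nonZeroDivisors R,
        ({r : R | r • x = 0} = {r : R | ∃ s : R, r = s * q'}) ∧
          ({y : Q ⧸ N | q' • y = 0} = {y : Q ⧸ N | ∃ r : R, y = r • x})) ∧
      (Ideal.span ({p, q} : Set R) = ⊤ →
        ({r : R | r • x = 0} = {r : R | ∃ s : R, r = s * q}) ∧
          ({y : Q ⧸ N | q • y = 0} = {y : Q ⧸ N | ∃ r : R, y = r • x})) := by
  intro Q N x
  set d := IsBezout.gcd p q with hd
  obtain ⟨p', hp'⟩ := IsBezout.gcd_dvd_left p q
  obtain ⟨q', hq'⟩ := IsBezout.gcd_dvd_right p q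
  obtain ⟨a, b, hab⟩ := IsBezout.gcd_eq_sum p q
  rw [← hd] at hp' hq' hab
  have hdnz : d ∈ nonZeroDivisors R := by
    rw [mem_nonZeroDivisors_iff_right]
    intro z hz
    exact (mem_nonZeroDivisors_iff_right.mp hq) z (by rw [hq']; linear_combination q' * hz)
  have hq'nz : q' ∈ nonZeroDivisors R := by
    rw [mem_nonZeroDivisors_iff_right]
    intro z hz
    exact (mem_nonZeroDivisors_iff_right.mp hq) z (by rw [hq']; linear_combination d * hz)
  have hcop : a * p' + b * q' = 1 := by
    have h0 : (a * p' + b * q' - 1) * d = 0 := by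
      linear_combination hab - a * hp' - b * hq'
    have := mem_nonZeroDivisors_iff_right.mp hdnz _ h0
    linear_combination this
  have hxx : x = Submodule.Quotient.mk (Localization.mk p' ⟨q', hq'nz⟩) := by
    show (Submodule.Quotient.mk (Localization.mk p ⟨q, hq⟩) : Q ⧸ N) = _
    congr 1
    rw [Localization.mk_eq_mk_iff, Localization.r_iff_exists]
    refine ⟨1, ?_⟩
    push_cast
    linear_combination q' * hp' - p' * hq'
  constructor
  · exact ⟨q', hq'nz, key15 p' q' hq'nz a b hcop x hxx⟩
  · intro htop
    obtain ⟨a₂, b₂, hab₂⟩ := Ideal.mem_span_pair.mp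
      ((Ideal.eq_top_iff_one _).mp htop)
    exact key15 p q hq a₂ b₂ hab₂ x rfl
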